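/- For all integers n ≥ k ≥ 1, the maximum number of intersecting pairs in a family of n axis-parallel boxes in ℝ^1 (i.e., closed intervals in ℝ) such that no k+1 of them have a point in common equals C(n,2) - C(n-k+1, 2). That is, this value is an upper bound for the number of intersecting pairs of every such family, and it is attained by some such family (for instance, k-1 copies of one interval together with n-k+1 pairwise disjoint intervals, each intersecting the common interval). -/

import Mathlib

/-- `S ⊆ ℝ` is a closed interval `[a, b]` with `a ≤ b`. -/
def IsInterval (S : Set ℝ) : Prop :=
  ∃ a b : ℝ, a ≤ b ∧ S = Set.Icc a b

/-- Number of intersecting pairs of an indexed family of sets. -/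
noncomputable def interPairs {n : ℕ} {α : Type*} (B : Fin n → Set α) : ℕ :=
  Set.ncard {p : Fin n × Fin n | p.1 < p.2 ∧ (B p.1 ∩ B p.2).Nonempty}


open Finset in
lemma ncard_filter {n : ℕ} (P : Fin n → Prop) [DecidablePred P] :
    Set.ncard {i | P i} = (Finset.univ.filter P).card := by
  rw [Set.ncard_eq_toFinset_card']
  simp [Set.toFinset_setOf]

lemma interPairs_eq_card {n : ℕ} (B : Fin n → Set ℝ)
    [DecidablePred fun p : Fin n × Fin n => p.1 < p.2 ∧ (B p.1 ∩ B p.2).Nonempty] :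
    interPairs B =
      (Finset.univ.filter fun p : Fin n × Fin n =>
        p.1 < p.2 ∧ (B p.1 ∩ B p.2).Nonempty).card := by
  rw [interPairs, Set.ncard_eq_toFinset_card']
  simp [Set.toFinset_setOf]

lemma sum_min_eq (t : ℕ) : ∀ n, t ≤ n →
    ∑ r ∈ Finset.range n, min t r = n.choose 2 - (n - t).choose 2 := by
  intro n
  induction n with
  | zero => intro h; interval_cases t; simp
  | succ m ih =>
    intro h
    rcases Nat.lt_or_ge t (m+1) with h' | h'
    · have ht : t ≤ m := by omega
      rw [Finset.sum_range_succ, ih ht]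
      have h1 : (m+1).choose 2 = m.choose 2 + m := by
        rw [Nat.choose_succ_succ]; simp [Nat.choose_one_right]; ring
      have h2 : (m+1-t).choose 2 = (m-t).choose 2 + (m-t) := by
        have : m + 1 - t = (m - t) + 1 := by omega
        rw [this, Nat.choose_succ_succ]; simp [Nat.choose_one_right]; ring
      have h3 : (m-t).choose 2 ≤ m.choose 2 := Nat.choose_le_choose 2 (by omega)
      have h4 : min t m = t := by omega
      omega
    · have ht : t = m + 1 := by omega
      subst ht
      have : ∀ r ∈ Finset.range (m+1), min (m+1) r = r := by
        intro r hr; simp at hr; omega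
      rw [Finset.sum_congr rfl this]
      have hg : (∑ i ∈ Finset.range (m+1), i) * 2 = (m+1) * m := by simpa using Finset.sum_range_id_mul_two (m+1)
      have h5 : (m+1).choose 2 = (m+1)*m/2 := by
        rw [Nat.choose_two_right]; simp
      have h6 : (m+1-(m+1)).choose 2 = 0 := by simp
      omega

lemma upper (n k : ℕ) (hkn : k ≤ n) (hk : 1 ≤ k)
    (B : Fin n → Set ℝ) (hB : ∀ i, IsInterval (B i))
    (hd : ∀ x : ℝ, Set.ncard {i | x ∈ B i} ≤ k) :
    interPairs B ≤ Nat.choose n 2 - Nat.choose (n - k + 1) 2 := by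
  classical
  obtain ⟨a, b, hab, hB'⟩ : ∃ a b : Fin n → ℝ,
      (∀ i, a i ≤ b i) ∧ ∀ i, B i = Set.Icc (a i) (b i) := by
    choose a b h1 h2 using hB; exact ⟨a, b, h1, h2⟩
  set key : Fin n → ℝ ×ₗ Fin n := fun i => toLex (b i, i) with hkeydef
  have keyinj : Function.Injective key := by
    intro i j h
    exact congrArg (fun p => (ofLex p).2) h
  have keyb : ∀ i j, key i ≤ key j → b i ≤ b j := by
    intro i j h
    rcases Prod.Lex.le_iff.mp h with h' | ⟨h', _⟩
    · exact le_of_lt h'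
    · exact le_of_eq h'
  set S : Finset (Fin n × Fin n) :=
    Finset.univ.filter (fun p : Fin n × Fin n =>
      p.1 < p.2 ∧ (B p.1 ∩ B p.2).Nonempty) with hSdef
  set g : Fin n × Fin n → Fin n := fun p => if key p.1 ≤ key p.2 then p.1 else p.2
    with hgdef
  set oth : Fin n × Fin n → Fin n := fun p => if key p.1 ≤ key p.2 then p.2 else p.1
    with hothdef
  have hsplit : ∀ p : Fin n × Fin n, (g p = p.1 ∧ oth p = p.2) ∨ (g p = p.2 ∧ oth p = p.1) := by
    intro p
    by_cases h : key p.1 ≤ key p.2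
    · left; simp [hgdef, hothdef, h]
    · right; simp [hgdef, hothdef, h]
  have hkeyle : ∀ p : Fin n × Fin n, key (g p) ≤ key (oth p) := by
    intro p
    by_cases h : key p.1 ≤ key p.2
    · simp [hgdef, hothdef, h]
    · simp [hgdef, hothdef, h]; exact le_of_not_ge h
  -- the set of possible "others" for a given i
  set above : Fin n → ℕ := fun i => (Finset.univ.filter fun j => key i < key j).card
    with habovedef
  have fiber_le : ∀ i : Fin n,
      (S.filter fun p => g p = i).card ≤ min (k - 1) (above i) := by
    intro i
    have hcard : (S.filter fun p => g p = i).card ≤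
        (Finset.univ.filter fun j => key i < key j ∧ b i ∈ B j).card := by
      apply Finset.card_le_card_of_injOn oth
      · intro p hp
        simp only [Finset.mem_coe, Finset.mem_filter, hSdef, Finset.mem_univ, true_and] at hp ⊢
        obtain ⟨⟨hlt, hne⟩, hgi⟩ := hp
        have hne12 : p.1 ≠ p.2 := ne_of_lt hlt
        have hkle : key i ≤ key (oth p) := hgi ▸ hkeyle p
        have hoth_ne : oth p ≠ i := by
          rcases hsplit p with ⟨h1, h2⟩ | ⟨h1, h2⟩ <;> rw [h2] <;> rw [h1] at hgi <;>
            simp [hgi] <;> omega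
        constructor
        · exact lt_of_le_of_ne hkle (fun h => hoth_ne (keyinj h.symm))
        · -- b i ∈ B (oth p)
          obtain ⟨x, hx1, hx2⟩ := hne
          have hbb : b i ≤ b (oth p) := keyb _ _ hkle
          rw [hB'] at hx1 hx2 ⊢
          rcases hsplit p with ⟨h1, h2⟩ | ⟨h1, h2⟩
          · rw [h1] at hgi
            rw [h2]
            exact ⟨le_trans hx2.1 (hgi ▸ hx1.2), h2 ▸ hbb⟩
          · rw [h1] at hgi
            rw [h2]
            exact ⟨le_trans hx1.1 (hgi ▸ hx2.2), h2 ▸ hbb⟩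
      · intro p hp q hq hpq
        simp only [Finset.mem_coe, Finset.mem_filter, hSdef, Finset.mem_univ, true_and] at hp hq
        obtain ⟨⟨hltp, _⟩, hgp⟩ := hp
        obtain ⟨⟨hltq, _⟩, hgq⟩ := hq
        have hp' : (p.1 = i ∧ p.2 = oth p) ∨ (p.1 = oth p ∧ p.2 = i) := by
          rcases hsplit p with ⟨h1, h2⟩ | ⟨h1, h2⟩
          · left; exact ⟨h1.symm.trans hgp, h2.symm⟩
          · right; exact ⟨h2.symm, h1.symm.trans hgp⟩
        have hq' : (q.1 = i ∧ q.2 = oth q) ∨ (q.1 = oth q ∧ q.2 = i) := by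
          rcases hsplit q with ⟨h1, h2⟩ | ⟨h1, h2⟩
          · left; exact ⟨h1.symm.trans hgq, h2.symm⟩
          · right; exact ⟨h2.symm, h1.symm.trans hgq⟩
        rw [hpq] at hp'
        rcases hp' with ⟨e1, e2⟩ | ⟨e1, e2⟩ <;> rcases hq' with ⟨f1, f2⟩ | ⟨f1, f2⟩
        · exact Prod.ext (e1.trans f1.symm) (e2.trans f2.symm)
        · exfalso; rw [e1, e2] at hltp; rw [f1, f2] at hltq; exact lt_asymm hltp hltq
        · exfalso; rw [e1, e2] at hltp; rw [f1, f2] at hltq; exact lt_asymm hltp hltq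
        · exact Prod.ext (e1.trans f1.symm) (e2.trans f2.symm)
    refine le_min ?_ ?_
    · -- ≤ k - 1
      refine le_trans hcard ?_
      have hsub : (Finset.univ.filter fun j => key i < key j ∧ b i ∈ B j) ⊆
          (Finset.univ.filter fun j => b i ∈ B j).erase i := by
        intro j hj
        simp only [Finset.mem_filter, Finset.mem_univ, true_and, Finset.mem_erase] at hj ⊢
        exact ⟨fun h => absurd (h ▸ hj.1) (lt_irrefl _), hj.2⟩
      have hiU : i ∈ (Finset.univ.filter fun j => b i ∈ B j) := by
        simp only [Finset.mem_filter, Finset.mem_univ, true_and]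
        rw [hB']; exact ⟨hab i, le_refl _⟩
      have hU : (Finset.univ.filter fun j => b i ∈ B j).card ≤ k := by
        rw [← ncard_filter]; exact hd (b i)
      calc (Finset.univ.filter fun j => key i < key j ∧ b i ∈ B j).card
          ≤ ((Finset.univ.filter fun j => b i ∈ B j).erase i).card := Finset.card_le_card hsub
        _ = (Finset.univ.filter fun j => b i ∈ B j).card - 1 := Finset.card_erase_of_mem hiU
        _ ≤ k - 1 := by omega
    · refine le_trans hcard ?_
      apply Finset.card_le_card
      intro j hj
      simp only [Finset.mem_filter, Finset.mem_univ, true_and] at hj ⊢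
      exact hj.1
  have above_lt : ∀ i, above i < n := by
    intro i
    show (Finset.univ.filter fun j => key i < key j).card < n
    have : (Finset.univ.filter fun j => key i < key j) ⊆ Finset.univ.erase i := by
      intro j hj
      simp only [Finset.mem_filter, Finset.mem_univ, true_and] at hj
      simp only [Finset.mem_erase, Finset.mem_univ, and_true]
      exact fun h => absurd (h ▸ hj) (lt_irrefl _)
    have h2 := Finset.card_le_card this
    rw [Finset.card_erase_of_mem (Finset.mem_univ i), Finset.card_univ, Fintype.card_fin] at h2
    have : 0 < n := i.pos
    omega
  have above_anti : ∀ i j, key i < key j → above j < above i := by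
    intro i j hij
    apply Finset.card_lt_card
    constructor
    · intro l hl
      simp only [Finset.mem_filter, Finset.mem_univ, true_and] at hl ⊢
      exact lt_trans hij hl
    · intro hsub
      have : j ∈ (Finset.univ.filter fun l => key i < key l) := by
        simp only [Finset.mem_filter, Finset.mem_univ, true_and]; exact hij
      have := hsub this
      simp only [Finset.mem_filter, Finset.mem_univ, true_and] at this
      exact absurd this (lt_irrefl _)
  have above_inj : Function.Injective above := by
    intro i j h
    by_contra hne
    rcases lt_trichotomy (key i) (key j) with h' | h' | h'
    · exact absurd h (ne_of_gt (above_anti _ _ h'))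
    · exact hne (keyinj h')
    · exact absurd h (ne_of_lt (above_anti _ _ h'))
  -- put it together
  rw [interPairs_eq_card, ← hSdef]
  rw [Finset.card_eq_sum_card_fiberwise (f := g) (t := Finset.univ) (fun p _ => Finset.mem_univ _)]
  calc ∑ i : Fin n, (S.filter fun p => g p = i).card
      ≤ ∑ i : Fin n, min (k - 1) (above i) := Finset.sum_le_sum (fun i _ => fiber_le i)
    _ = ∑ r ∈ Finset.univ.image above, min (k - 1) r := by
        rw [Finset.sum_image (fun i _ j _ h => above_inj h)]
    _ ≤ ∑ r ∈ Finset.range n, min (k - 1) r := by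
        apply Finset.sum_le_sum_of_subset
        intro r hr
        simp only [Finset.mem_image] at hr
        obtain ⟨i, _, rfl⟩ := hr
        exact Finset.mem_range.mpr (above_lt i)
    _ = n.choose 2 - (n - (k - 1)).choose 2 := sum_min_eq (k - 1) n (by omega)
    _ = n.choose 2 - (n - k + 1).choose 2 := by
        congr 2; omega

lemma lower (n k : ℕ) (hkn : k ≤ n) (hk : 1 ≤ k) :
    ∃ B : Fin n → Set ℝ, (∀ i, IsInterval (B i)) ∧
      (∀ x : ℝ, Set.ncard {i | x ∈ B i} ≤ k) ∧
      interPairs B = Nat.choose n 2 - Nat.choose (n - k + 1) 2 := by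
  classical
  set B : Fin n → Set ℝ := fun i =>
    if (i : ℕ) < k - 1 then Set.Icc 0 (n : ℝ) else Set.Icc ((i : ℕ) : ℝ) ((i : ℕ) : ℝ)
    with hBdef
  have hn0 : (0 : ℝ) ≤ (n : ℝ) := by positivity
  refine ⟨B, ?_, ?_, ?_⟩
  · intro i
    by_cases h : (i : ℕ) < k - 1
    · exact ⟨0, n, hn0, by simp [hBdef, h]⟩
    · exact ⟨((i : ℕ) : ℝ), ((i : ℕ) : ℝ), le_refl _, by simp [hBdef, h]⟩
  · intro x
    rw [ncard_filter]
    have hsub : (Finset.univ.filter fun i : Fin n => x ∈ B i) ⊆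
        (Finset.univ.filter fun i : Fin n => (i : ℕ) < k - 1) ∪
        (Finset.univ.filter fun i : Fin n => ((i : ℕ) : ℝ) = x) := by
      intro i hi
      simp only [Finset.mem_filter, Finset.mem_univ, true_and, Finset.mem_union] at hi ⊢
      by_cases h : (i : ℕ) < k - 1
      · exact Or.inl h
      · right
        rw [hBdef] at hi
        simp only [h, if_false, Set.mem_Icc] at hi
        exact (le_antisymm hi.2 hi.1).symm
    have h1 : (Finset.univ.filter fun i : Fin n => (i : ℕ) < k - 1).card ≤ k - 1 := by
      calc (Finset.univ.filter fun i : Fin n => (i : ℕ) < k - 1).card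
          ≤ (Finset.range (k - 1)).card :=
            Finset.card_le_card_of_injOn (fun i : Fin n => (i : ℕ))
              (fun i hi => by
                simp only [Finset.mem_coe, Finset.mem_filter, Finset.mem_univ, true_and] at hi
                exact Finset.mem_range.mpr hi)
              (fun i _ j _ h => Fin.ext h)
        _ = k - 1 := Finset.card_range _
    have h2 : (Finset.univ.filter fun i : Fin n => ((i : ℕ) : ℝ) = x).card ≤ 1 := by
      apply Finset.card_le_one.mpr
      intro i hi j hj
      simp only [Finset.mem_filter, Finset.mem_univ, true_and] at hi hj
      exact Fin.ext (Nat.cast_injective (hi.trans hj.symm))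
    calc (Finset.univ.filter fun i : Fin n => x ∈ B i).card
        ≤ _ := Finset.card_le_card hsub
      _ ≤ _ := Finset.card_union_le _ _
      _ ≤ (k - 1) + 1 := Nat.add_le_add h1 h2
      _ ≤ k := by omega
  · rw [interPairs_eq_card]
    have hset : (Finset.univ.filter fun p : Fin n × Fin n =>
        p.1 < p.2 ∧ (B p.1 ∩ B p.2).Nonempty) =
        (Finset.univ.filter fun p : Fin n × Fin n =>
        p.1 < p.2 ∧ (p.1 : ℕ) < k - 1) := by
      apply Finset.filter_congr
      intro p _
      constructor
      · rintro ⟨hlt, x, hx1, hx2⟩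
        refine ⟨hlt, ?_⟩
        by_contra h
        have h2 : ¬ ((p.2 : ℕ) < k - 1) := by
          have := (Fin.lt_iff_val_lt_val.mp hlt); omega
        rw [hBdef] at hx1 hx2
        simp only [h, h2, if_false, Set.mem_Icc] at hx1 hx2
        have e1 : x = ((p.1 : ℕ) : ℝ) := le_antisymm hx1.2 hx1.1
        have e2 : x = ((p.2 : ℕ) : ℝ) := le_antisymm hx2.2 hx2.1
        have : (p.1 : ℕ) = (p.2 : ℕ) := Nat.cast_injective (e1.symm.trans e2)
        have := Fin.lt_iff_val_lt_val.mp hlt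
        omega
      · rintro ⟨hlt, h1⟩
        refine ⟨hlt, ?_⟩
        by_cases h2 : (p.2 : ℕ) < k - 1
        · exact ⟨0, by rw [hBdef]; simp only [h1, h2, if_true]; exact ⟨le_refl _, hn0⟩,
            by rw [hBdef]; simp only [h1, h2, if_true]; exact ⟨le_refl _, hn0⟩⟩
        · refine ⟨((p.2 : ℕ) : ℝ), ?_, ?_⟩
          · rw [hBdef]
            simp only [h1, if_true, Set.mem_Icc]
            constructor
            · positivity
            · exact_mod_cast le_of_lt p.2.isLt
          · rw [hBdef]
            simp only [h2, if_false, Set.mem_Icc]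
            exact ⟨le_refl _, le_refl _⟩
    rw [hset]
    rw [Finset.card_eq_sum_card_fiberwise
      (f := fun p : Fin n × Fin n => p.2) (t := Finset.univ) (fun p _ => Finset.mem_univ _)]
    have hfib : ∀ j : Fin n,
        ((Finset.univ.filter fun p : Fin n × Fin n => p.1 < p.2 ∧ (p.1 : ℕ) < k - 1).filter
          fun p => p.2 = j).card = min (k - 1) (j : ℕ) := by
      intro j
      rw [← Finset.card_range (min (k - 1) (j : ℕ))]
      apply Finset.card_bij (fun p _ => (p.1 : ℕ))
      · intro p hp
        simp only [Finset.mem_filter, Finset.mem_univ, true_and] at hp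
        obtain ⟨⟨hlt, hk1⟩, hj⟩ := hp
        have hlt' := Fin.lt_iff_val_lt_val.mp hlt
        have hj' : (p.2 : ℕ) = (j : ℕ) := by rw [hj]
        rw [Finset.mem_range]
        refine lt_min hk1 ?_
        omega
      · intro p hp q hq h
        simp only [Finset.mem_filter, Finset.mem_univ, true_and] at hp hq
        exact Prod.ext (Fin.ext h) (hp.2.trans hq.2.symm)
      · intro m hm
        rw [Finset.mem_range] at hm
        have hmn : m < n := by
          have := j.isLt; omega
        have hm1 : m < k - 1 := lt_of_lt_of_le hm (min_le_left _ _)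
        have hm2 : m < (j : ℕ) := lt_of_lt_of_le hm (min_le_right _ _)
        have hmem : ((⟨m, hmn⟩ : Fin n), j) ∈
            (Finset.univ.filter fun p : Fin n × Fin n =>
              p.1 < p.2 ∧ (p.1 : ℕ) < k - 1).filter (fun p => p.2 = j) := by
          rw [Finset.mem_filter, Finset.mem_filter]
          exact ⟨⟨Finset.mem_univ _, Fin.lt_iff_val_lt_val.mpr hm2, hm1⟩, rfl⟩
        exact ⟨_, hmem, rfl⟩
    calc ∑ j : Fin n, ((Finset.univ.filter fun p : Fin n × Fin n =>
            p.1 < p.2 ∧ (p.1 : ℕ) < k - 1).filter fun p => p.2 = j).card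
        = ∑ j : Fin n, min (k - 1) (j : ℕ) := Finset.sum_congr rfl (fun j _ => hfib j)
      _ = ∑ r ∈ Finset.range n, min (k - 1) r :=
          Fin.sum_univ_eq_sum_range (fun j => min (k - 1) j) n
      _ = n.choose 2 - (n - (k - 1)).choose 2 := sum_min_eq (k - 1) n (by omega)
      _ = n.choose 2 - (n - k + 1).choose 2 := by congr 2; omega

/-- For `n ≥ k ≥ 1`, the maximal number of intersecting pairs in a family of `n` closed
intervals in `ℝ`, no `k+1` of which have a common point, equals `C(n,2) - C(n-k+1, 2)`. -/
theorem intervals_extremal (n k : ℕ) (hkn : k ≤ n) (hk : 1 ≤ k) :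
    (∀ B : Fin n → Set ℝ, (∀ i, IsInterval (B i)) →
        (∀ x : ℝ, Set.ncard {i | x ∈ B i} ≤ k) →
        interPairs B ≤ Nat.choose n 2 - Nat.choose (n - k + 1) 2) ∧
    (∃ B : Fin n → Set ℝ, (∀ i, IsInterval (B i)) ∧
        (∀ x : ℝ, Set.ncard {i | x ∈ B i} ≤ k) ∧
        interPairs B = Nat.choose n 2 - Nat.choose (n - k + 1) 2) :=
  ⟨fun B h1 h2 => upper n k hkn hk B h1 h2, lower n k hkn hk⟩
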